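/- For any r ≥ 0 and independent X^(k) ∼ Beta(θ/K + (k−1)/K, β/K), k = 1,...,K, the r-th moment of the geometric mean satisfies E[((∏_{k=1}^K X^(k))^{1/K})^r] = B(θ + r, β)/B(θ, β). -/

import Mathlib

open MeasureTheory ProbabilityTheory
open Real Set Finset NNReal ENNReal

/-- The beta function `B(a, b) = Γ(a)Γ(b)/Γ(a+b)`. -/
noncomputable def betaFun (a b : ℝ) : ℝ := Real.Gamma a * Real.Gamma b / Real.Gamma (a + b)

/-- The Beta distribution with parameters `a, b > 0`, defined by its density
`x^(a-1) (1-x)^(b-1) / B(a,b)` on `(0, 1)`. -/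
noncomputable def betaMeasure' (a b : ℝ) : Measure ℝ :=
  volume.withDensity (fun x =>
    ENNReal.ofReal (if x ∈ Set.Ioo (0 : ℝ) 1
      then x ^ (a - 1) * (1 - x) ^ (b - 1) / betaFun a b else 0))

private lemma convexOn_finset_sum {ι : Type*} (s : Finset ι) (f : ι → ℝ → ℝ)
    (h : ∀ i ∈ s, ConvexOn ℝ (Ioi (0:ℝ)) (f i)) :
    ConvexOn ℝ (Ioi (0:ℝ)) (fun z => ∑ i ∈ s, f i z) := by
  classical
  induction s using Finset.induction with
  | empty => simpa using convexOn_const (0:ℝ) (convex_Ioi 0)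
  | insert _ _ hi ih =>
    rename_i a t
    simp only [Finset.sum_insert hi]
    exact (h a (Finset.mem_insert_self a t)).add
      (ih fun i hit => h i (Finset.mem_insert_of_mem hit))

private lemma convexOn_log_Gamma_affine {c d : ℝ} (hc : 0 < c) (hd : 0 ≤ d) :
    ConvexOn ℝ (Ioi 0) (fun z => Real.log (Real.Gamma (c * z + d))) := by
  refine ⟨convex_Ioi 0, fun x hx y hy a b ha hb hab => ?_⟩
  have hx' : (0:ℝ) < c * x + d := by
    have := mem_Ioi.1 hx; positivity
  have hy' : (0:ℝ) < c * y + d := by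
    have := mem_Ioi.1 hy; positivity
  have h2 := convexOn_log_Gamma.2 (mem_Ioi.2 hx') (mem_Ioi.2 hy') ha hb hab
  simp only [Function.comp_apply, smul_eq_mul] at h2 ⊢
  have hd' : a * d + b * d = d := by rw [← add_mul, hab, one_mul]
  have harg : a * (c * x + d) + b * (c * y + d) = c * (a * x + b * y) + d := by
    nlinarith [hd']
  rwa [harg] at h2

/-- Auxiliary: `G K z = ∏_{k<K} Γ((z+k)/K)`. -/
private noncomputable def gaussG (K : ℕ) (z : ℝ) : ℝ :=
  ∏ k ∈ range K, Real.Gamma ((z + k) / K)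

private lemma gaussG_pos {K : ℕ} (hK : 0 < K) {z : ℝ} (hz : 0 < z) : 0 < gaussG K z := by
  refine Finset.prod_pos fun k hk => Real.Gamma_pos_of_pos ?_
  have : (0:ℝ) ≤ (k:ℝ) := Nat.cast_nonneg k
  have hKpos : (0:ℝ) < K := Nat.cast_pos.2 hK
  positivity

private lemma gaussG_succ {K : ℕ} (hK : 0 < K) {z : ℝ} (hz : 0 < z) :
    gaussG K (z + 1) = (z / K) * gaussG K z := by
  have hKpos : (0:ℝ) < K := Nat.cast_pos.2 hK
  have hzK : (0:ℝ) < z / K := by positivity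
  have key : (∏ k ∈ range K, Real.Gamma ((z + (k+1)) / K)) * Real.Gamma (z / K)
      = gaussG K z * Real.Gamma ((z + K) / K) := by
    have h1 := Finset.prod_range_succ' (fun k : ℕ => Real.Gamma ((z + k) / K)) K
    have h2 := Finset.prod_range_succ (fun k : ℕ => Real.Gamma ((z + k) / K)) K
    rw [h2] at h1
    simpa [gaussG] using h1.symm
  have hGz : Real.Gamma (z / K) ≠ 0 := (Real.Gamma_pos_of_pos hzK).ne'
  have hshift : Real.Gamma ((z + K) / K) = (z / K) * Real.Gamma (z / K) := by
    have : (z + K) / K = z / K + 1 := by field_simp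
    rw [this, Real.Gamma_add_one hzK.ne']
  have : gaussG K (z + 1) = ∏ k ∈ range K, Real.Gamma ((z + (k+1)) / K) := by
    unfold gaussG
    refine Finset.prod_congr rfl fun k _ => ?_
    ring_nf
  rw [this]
  have := key
  rw [hshift] at this
  have h3 : (∏ k ∈ range K, Real.Gamma ((z + (k+1)) / K)) * Real.Gamma (z / K)
      = ((z / K) * gaussG K z) * Real.Gamma (z / K) := by
    rw [key, hshift]; ring
  exact mul_right_cancel₀ hGz h3

/-- Gauss-multiplication-lite: `∏_{k<K} Γ((z+k)/K) = (K * gaussG K 1) * Γ z / K ^ z`. -/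
private lemma gaussG_eq {K : ℕ} (hK : 0 < K) {z : ℝ} (hz : 0 < z) :
    gaussG K z = (K * gaussG K 1) * Real.Gamma z / (K:ℝ) ^ z := by
  have hKpos : (0:ℝ) < K := Nat.cast_pos.2 hK
  set c : ℝ := K * gaussG K 1 with hc
  have hcpos : 0 < c := by
    have := gaussG_pos hK one_pos; positivity
  set f : ℝ → ℝ := fun z => (K:ℝ) ^ z * gaussG K z / c with hf
  have hfpos : ∀ {y : ℝ}, 0 < y → 0 < f y := by
    intro y hy
    have h1 := gaussG_pos hK hy
    have h2 : (0:ℝ) < (K:ℝ) ^ y := rpow_pos_of_pos hKpos y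
    positivity
  have hfeq : ∀ {y : ℝ}, 0 < y → f (y + 1) = y * f y := by
    intro y hy
    simp only [hf]
    rw [gaussG_succ hK hy, Real.rpow_add hKpos, Real.rpow_one]
    field_simp
  have hfone : f 1 = 1 := by
    simp only [hf, Real.rpow_one, hc]
    field_simp
    exact div_self (gaussG_pos hK one_pos).ne'
  have hconv : ConvexOn ℝ (Ioi 0) (Real.log ∘ f) := by
    have heq : EqOn (Real.log ∘ f)
        (fun z => (∑ k ∈ range K, Real.log (Real.Gamma ((z + k) / K)))
          + Real.log K * z + (- Real.log c)) (Ioi 0) := by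
      intro z hz
      have hz' := mem_Ioi.1 hz
      have hG := gaussG_pos hK hz'
      have hKz : (0:ℝ) < (K:ℝ) ^ z := rpow_pos_of_pos hKpos z
      simp only [Function.comp_apply, hf]
      rw [Real.log_div (by positivity) hcpos.ne', Real.log_mul hKz.ne' hG.ne',
        Real.log_rpow hKpos]
      unfold gaussG
      rw [Real.log_prod]
      · ring
      · intro k hk
        refine (Real.Gamma_pos_of_pos ?_).ne'
        have : (0:ℝ) ≤ (k:ℝ) := Nat.cast_nonneg k
        positivity
    refine (((ConvexOn.add ?_ ?_).add_const _)).congr heq.symm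
    · refine convexOn_finset_sum _ _ fun k _ => ?_
      have : (fun z : ℝ => Real.log (Real.Gamma ((z + k) / K)))
          = fun z => Real.log (Real.Gamma ((K:ℝ)⁻¹ * z + k / K)) := by
        funext z; rw [add_div]; ring_nf
      rw [this]
      exact convexOn_log_Gamma_affine (by positivity) (by positivity)
    · simpa only [smul_eq_mul, id] using
        (convexOn_id (convex_Ioi (0:ℝ))).smul (Real.log_nonneg (by exact_mod_cast hK))
  have := Real.eq_Gamma_of_log_convex hconv hfeq hfpos hfone (mem_Ioi.2 hz)
  have hKz : (0:ℝ) < (K:ℝ) ^ z := rpow_pos_of_pos hKpos z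
  simp only [hf] at this
  field_simp at this ⊢
  linarith [this]


private lemma betaFun_pos {a b : ℝ} (ha : 0 < a) (hb : 0 < b) : 0 < betaFun a b := by
  unfold betaFun
  have h1 := Real.Gamma_pos_of_pos ha
  have h2 := Real.Gamma_pos_of_pos hb
  have h3 := Real.Gamma_pos_of_pos (add_pos ha hb)
  positivity

private lemma prod_betaFun_eq {K : ℕ} (hK : 0 < K) {z β : ℝ} (hz : 0 < z) (hβ : 0 < β) :
    ∏ k ∈ range K, betaFun (z / K + k / K) (β / K)
      = Real.Gamma (β / K) ^ K * (K:ℝ) ^ β * Real.Gamma z / Real.Gamma (z + β) := by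
  have hKpos : (0:ℝ) < K := Nat.cast_pos.2 hK
  have step1 : ∏ k ∈ range K, betaFun (z / K + k / K) (β / K)
      = gaussG K z * Real.Gamma (β / K) ^ K / gaussG K (z + β) := by
    have hpowprod : Real.Gamma (β / K) ^ K = ∏ _k ∈ range K, Real.Gamma (β / K) := by simp
    rw [gaussG, gaussG, hpowprod, ← Finset.prod_mul_distrib, ← Finset.prod_div_distrib]
    refine Finset.prod_congr rfl fun k hk => ?_
    unfold betaFun
    have e1 : z / K + (k:ℝ) / K = (z + k) / K := by ring
    have e2 : (z + (k:ℝ)) / K + β / K = (z + β + k) / K := by ring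
    rw [e1, e2]
  rw [step1, gaussG_eq hK hz, gaussG_eq hK (by positivity : (0:ℝ) < z + β)]
  have hc : (0:ℝ) < K * gaussG K 1 := by
    have := gaussG_pos hK one_pos; positivity
  have hKz : (0:ℝ) < (K:ℝ) ^ z := rpow_pos_of_pos hKpos z
  have hKzb : (0:ℝ) < (K:ℝ) ^ (z + β) := rpow_pos_of_pos hKpos (z + β)
  have hGzb : (0:ℝ) < Real.Gamma (z + β) := Real.Gamma_pos_of_pos (by positivity)
  have hGz : (0:ℝ) < Real.Gamma z := Real.Gamma_pos_of_pos hz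
  have hpow : (K:ℝ) ^ (z + β) = (K:ℝ) ^ z * (K:ℝ) ^ β := rpow_add hKpos z β
  rw [hpow]
  field_simp
  ring_nf; exact mul_inv_cancel₀ (gaussG_pos hK one_pos).ne'

private lemma prod_betaFun_ratio {K : ℕ} (hK : 0 < K) {θ β r : ℝ}
    (hθ : 0 < θ) (hβ : 0 < β) (hr : 0 ≤ r) :
    ∏ k ∈ range K, (betaFun ((θ + r) / K + k / K) (β / K) / betaFun (θ / K + k / K) (β / K))
      = betaFun (θ + r) β / betaFun θ β := by
  rw [Finset.prod_div_distrib, prod_betaFun_eq hK (by positivity) hβ,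
    prod_betaFun_eq hK hθ hβ]
  have hKpos : (0:ℝ) < K := Nat.cast_pos.2 hK
  have h1 := Real.Gamma_pos_of_pos hθ
  have h2 := Real.Gamma_pos_of_pos (by positivity : (0:ℝ) < θ + r)
  have h3 := Real.Gamma_pos_of_pos (by positivity : (0:ℝ) < θ + β)
  have h4 := Real.Gamma_pos_of_pos (by positivity : (0:ℝ) < θ + r + β)
  have h5 := Real.Gamma_pos_of_pos hβ
  have h6 := Real.Gamma_pos_of_pos (by positivity : (0:ℝ) < β / K)
  have h7 : (0:ℝ) < (K:ℝ) ^ β := rpow_pos_of_pos hKpos β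
  unfold betaFun
  field_simp




private lemma betaFun_pos' {a b : ℝ} (ha : 0 < a) (hb : 0 < b) : 0 < betaFun a b := by
  unfold betaFun
  have h1 := Real.Gamma_pos_of_pos ha
  have h2 := Real.Gamma_pos_of_pos hb
  have h3 := Real.Gamma_pos_of_pos (add_pos ha hb)
  positivity

/-- The real Beta integral over `Ioo 0 1`. -/
private lemma real_betaIntegral {a b : ℝ} (ha : 0 < a) (hb : 0 < b) :
    ∫ x in Ioo (0:ℝ) 1, x ^ (a - 1) * (1 - x) ^ (b - 1) = betaFun a b := by
  have hC := Complex.Gamma_mul_Gamma_eq_betaIntegral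
    (s := (a:ℂ)) (t := (b:ℂ)) (by simpa using ha) (by simpa using hb)
  have key : Complex.betaIntegral a b
      = ((∫ x in (0:ℝ)..1, x ^ (a - 1) * (1 - x) ^ (b - 1) : ℝ) : ℂ) := by
    rw [Complex.betaIntegral, ← intervalIntegral.integral_ofReal]
    refine intervalIntegral.integral_congr fun x hx => ?_
    rw [Set.uIcc_of_le zero_le_one] at hx
    have e1 : ((a:ℂ) - 1) = ((a - 1 : ℝ) : ℂ) := by push_cast; ring
    have e2 : ((b:ℂ) - 1) = ((b - 1 : ℝ) : ℂ) := by push_cast; ring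
    have e3 : (1 - (x:ℂ)) = ((1 - x : ℝ) : ℂ) := by push_cast; ring
    rw [e1, e2, e3, ← Complex.ofReal_cpow hx.1,
      ← Complex.ofReal_cpow (by linarith [hx.2] : (0:ℝ) ≤ 1 - x)]
    push_cast
    ring
  rw [key] at hC
  rw [← Complex.ofReal_add, Complex.Gamma_ofReal, Complex.Gamma_ofReal,
    Complex.Gamma_ofReal, ← Complex.ofReal_mul, ← Complex.ofReal_mul] at hC
  have hR : Real.Gamma a * Real.Gamma b
      = Real.Gamma (a + b) * ∫ x in (0:ℝ)..1, x ^ (a - 1) * (1 - x) ^ (b - 1) :=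
    mod_cast hC
  have hGab : Real.Gamma (a + b) ≠ 0 := (Real.Gamma_pos_of_pos (add_pos ha hb)).ne'
  have hint : (∫ x in Ioo (0:ℝ) 1, x ^ (a - 1) * (1 - x) ^ (b - 1))
      = ∫ x in (0:ℝ)..1, x ^ (a - 1) * (1 - x) ^ (b - 1) := by
    rw [intervalIntegral.integral_of_le zero_le_one, ← integral_Ioc_eq_integral_Ioo]
  rw [hint, betaFun, hR]
  field_simp

private lemma betaDensity_measurable (a b : ℝ) :
    Measurable (fun x => ENNReal.ofReal (if x ∈ Set.Ioo (0 : ℝ) 1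
      then x ^ (a - 1) * (1 - x) ^ (b - 1) / betaFun a b else 0)) := by
  refine ENNReal.measurable_ofReal.comp (Measurable.ite measurableSet_Ioo ?_ measurable_const)
  fun_prop

private lemma betaMeasure_compl_Ioo {a b : ℝ} :
    betaMeasure' a b (Set.Ioo (0:ℝ) 1)ᶜ = 0 := by
  rw [betaMeasure', withDensity_apply _ measurableSet_Ioo.compl]
  have : ∀ x ∈ (Set.Ioo (0:ℝ) 1)ᶜ,
      ENNReal.ofReal (if x ∈ Set.Ioo (0 : ℝ) 1
        then x ^ (a - 1) * (1 - x) ^ (b - 1) / betaFun a b else 0) = 0 := by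
    intro x hx
    rw [if_neg hx, ENNReal.ofReal_zero]
  rw [setLIntegral_congr_fun measurableSet_Ioo.compl this]
  simp

/-- Moment of the truncated power function under the Beta measure. -/
private lemma betaMeasure_moment {a b s : ℝ} (ha : 0 < a) (hb : 0 < b) (hs : 0 ≤ s) :
    ∫ x, (if x ∈ Set.Ioo (0:ℝ) 1 then x ^ s else 0) ∂(betaMeasure' a b)
      = betaFun (a + s) b / betaFun a b := by
  have hB := betaFun_pos' ha hb
  have hform : (fun x => ENNReal.ofReal (if x ∈ Set.Ioo (0 : ℝ) 1
      then x ^ (a - 1) * (1 - x) ^ (b - 1) / betaFun a b else 0))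
      = (fun x => ((Real.toNNReal (if x ∈ Set.Ioo (0 : ℝ) 1
      then x ^ (a - 1) * (1 - x) ^ (b - 1) / betaFun a b else 0) : ℝ≥0) : ℝ≥0∞)) := rfl
  have hmeasnn : Measurable (fun x => Real.toNNReal (if x ∈ Set.Ioo (0 : ℝ) 1
      then x ^ (a - 1) * (1 - x) ^ (b - 1) / betaFun a b else 0)) := by
    refine measurable_real_toNNReal.comp (Measurable.ite measurableSet_Ioo ?_ measurable_const)
    fun_prop
  rw [betaMeasure', hform, integral_withDensity_eq_integral_smul hmeasnn]
  have hpt : ∀ x, (Real.toNNReal (if x ∈ Set.Ioo (0 : ℝ) 1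
        then x ^ (a - 1) * (1 - x) ^ (b - 1) / betaFun a b else 0))
        • (if x ∈ Set.Ioo (0:ℝ) 1 then x ^ s else 0)
      = Set.indicator (Set.Ioo (0:ℝ) 1)
          (fun x => x ^ (a + s - 1) * (1 - x) ^ (b - 1) / betaFun a b) x := by
    intro x
    by_cases hx : x ∈ Set.Ioo (0:ℝ) 1
    · rw [if_pos hx, if_pos hx, Set.indicator_of_mem hx]
      have hx0 : (0:ℝ) < x := hx.1
      have hx1 : (0:ℝ) < 1 - x := by linarith [hx.2]
      rw [NNReal.smul_def, smul_eq_mul, Real.coe_toNNReal _ (by positivity)]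
      rw [show a + s - 1 = (a - 1) + s by ring, Real.rpow_add hx0]
      ring
    · rw [if_neg hx, if_neg hx, Set.indicator_of_notMem hx]
      simp
  rw [show (fun x => (Real.toNNReal (if x ∈ Set.Ioo (0 : ℝ) 1
        then x ^ (a - 1) * (1 - x) ^ (b - 1) / betaFun a b else 0))
        • (if x ∈ Set.Ioo (0:ℝ) 1 then x ^ s else 0))
      = Set.indicator (Set.Ioo (0:ℝ) 1)
          (fun x => x ^ (a + s - 1) * (1 - x) ^ (b - 1) / betaFun a b) from funext hpt,
    integral_indicator measurableSet_Ioo, integral_div, real_betaIntegral (by positivity) hb]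


private lemma integral_finset_prod_of_indep {Ω : Type*} [MeasurableSpace Ω]
    (μ : Measure Ω) [IsProbabilityMeasure μ] {ι : Type*} (Y : ι → Ω → ℝ)
    (hmeas : ∀ i, Measurable (Y i)) (hnn : ∀ i ω, 0 ≤ Y i ω)
    (hindep : iIndepFun Y μ) (s : Finset ι) :
    ∫ ω, ∏ i ∈ s, Y i ω ∂μ = ∏ i ∈ s, ∫ ω, Y i ω ∂μ := by
  classical
  induction s using Finset.induction with
  | empty => simp
  | insert _ _ hi ih =>
    rename_i a t
    simp only [Finset.prod_insert hi]
    have hI : IndepFun (∏ j ∈ t, Y j) (Y a) μ :=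
      hindep.indepFun_finsetProd_of_notMem hmeas hi
    have hprodmeas : Measurable (fun ω => ∏ j ∈ t, Y j ω) :=
      Finset.measurable_prod t fun j _ => hmeas j
    have happ : (∏ j ∈ t, Y j) = fun ω => ∏ j ∈ t, Y j ω := by
      funext ω; simp [Finset.prod_apply]
    have := hI.symm.integral_mul_eq_mul_integral
      (hmeas a).aestronglyMeasurable (by rw [happ]; exact hprodmeas.aestronglyMeasurable)
    have hmul : (Y a * ∏ j ∈ t, Y j) = fun ω => Y a ω * ∏ j ∈ t, Y j ω := by
      funext ω; simp [happ]
    rw [hmul, happ] at this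
    rw [this, ih]


/-- For any `r ≥ 0` and independent `X^(k) ∼ Beta(θ/K + k/K, β/K)`, `k = 0, ..., K-1`,
the `r`-th moment of the geometric mean satisfies
`E[((∏ k, X^(k))^(1/K))^r] = B(θ + r, β) / B(θ, β)`. -/
theorem geom_mean_beta_moment
    {Ω : Type*} [MeasurableSpace Ω] (μ : Measure Ω) [IsProbabilityMeasure μ]
    (K : ℕ) (hK : 0 < K) (θ β : ℝ) (hθ : 0 < θ) (hβ : 0 < β) (r : ℝ) (hr : 0 ≤ r)
    (X : Fin K → Ω → ℝ) (hmeas : ∀ k, Measurable (X k))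
    (hindep : iIndepFun X μ)
    (hlaw : ∀ k : Fin K, Measure.map (X k) μ
      = betaMeasure' (θ / K + (k : ℕ) / K) (β / K)) :
    ∫ ω, ((∏ k, X k ω) ^ ((K : ℝ)⁻¹)) ^ r ∂μ = betaFun (θ + r) β / betaFun θ β := by
  classical
  have hKpos : (0:ℝ) < K := Nat.cast_pos.2 hK
  set g : ℝ → ℝ := fun x => if x ∈ Set.Ioo (0:ℝ) 1 then x ^ (r / K) else 0 with hg
  have hg_meas : Measurable g := by
    refine Measurable.ite measurableSet_Ioo ?_ measurable_const
    fun_prop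
  have hg_nn : ∀ x, 0 ≤ g x := by
    intro x
    simp only [hg]
    split_ifs with hx
    · exact Real.rpow_nonneg hx.1.le _
    · exact le_refl 0
  -- a.e. membership in Ioo 0 1
  have hae : ∀ᵐ ω ∂μ, ∀ k : Fin K, X k ω ∈ Set.Ioo (0:ℝ) 1 := by
    rw [MeasureTheory.ae_all_iff]
    intro k
    have h0 : μ (X k ⁻¹' (Set.Ioo (0:ℝ) 1)ᶜ) = 0 := by
      rw [← Measure.map_apply (hmeas k) measurableSet_Ioo.compl, hlaw k]
      exact betaMeasure_compl_Ioo
    refine measure_mono_null (fun ω hω => ?_) h0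
    exact hω
  -- rewrite the integrand a.e.
  have hcongr : ∫ ω, ((∏ k, X k ω) ^ ((K : ℝ)⁻¹)) ^ r ∂μ
      = ∫ ω, ∏ k, g (X k ω) ∂μ := by
    refine integral_congr_ae ?_
    filter_upwards [hae] with ω hω
    have hpos : ∀ k : Fin K, 0 < X k ω := fun k => (hω k).1
    have hprodpos : 0 < ∏ k, X k ω := Finset.prod_pos fun k _ => hpos k
    have e1 : ((∏ k, X k ω) ^ ((K : ℝ)⁻¹)) ^ r = (∏ k, X k ω) ^ (r / K) := by
      rw [← Real.rpow_mul hprodpos.le]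
      congr 1
      field_simp
    rw [e1, ← Real.finset_prod_rpow _ _ (fun k _ => (hpos k).le)]
    refine Finset.prod_congr rfl fun k _ => ?_
    simp only [hg, if_pos (hω k)]
  rw [hcongr]
  -- independence: split the integral
  have hYindep : iIndepFun (fun k ω => g (X k ω)) μ :=
    hindep.comp (fun _ => g) (fun _ => hg_meas)
  have hsplit : ∫ ω, ∏ k, g (X k ω) ∂μ = ∏ k, ∫ ω, g (X k ω) ∂μ :=
    integral_finset_prod_of_indep μ _ (fun k => hg_meas.comp (hmeas k))
      (fun k ω => hg_nn _) hYindep Finset.univ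
  rw [hsplit]
  -- compute each factor
  have hfactor : ∀ k : Fin K, ∫ ω, g (X k ω) ∂μ
      = betaFun ((θ + r) / K + (k:ℕ) / K) (β / K) / betaFun (θ / K + (k:ℕ) / K) (β / K) := by
    intro k
    have hmap : ∫ ω, g (X k ω) ∂μ = ∫ x, g x ∂(betaMeasure' (θ / K + (k:ℕ) / K) (β / K)) := by
      rw [← hlaw k, integral_map (hmeas k).aemeasurable hg_meas.aestronglyMeasurable]
    have hak : (0:ℝ) < θ / K + (k:ℕ) / K := by
      have : (0:ℝ) ≤ (k:ℕ) := Nat.cast_nonneg _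
      positivity
    have hbk : (0:ℝ) < β / K := by positivity
    have hsk : (0:ℝ) ≤ r / K := by positivity
    rw [hmap, hg]
    rw [betaMeasure_moment hak hbk hsk]
    congr 2
    ring
  rw [Finset.prod_congr rfl fun k _ => hfactor k]
  rw [show (∏ k : Fin K, (betaFun ((θ + r) / K + (k:ℕ) / K) (β / K)
        / betaFun (θ / K + (k:ℕ) / K) (β / K)))
      = ∏ k ∈ Finset.range K, (betaFun ((θ + r) / K + (k:ℕ) / K) (β / K)
        / betaFun (θ / K + (k:ℕ) / K) (β / K)) from
    Fin.prod_univ_eq_prod_range (fun n : ℕ => betaFun ((θ + r) / K + n / K) (β / K)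
      / betaFun (θ / K + n / K) (β / K)) K]
  exact prod_betaFun_ratio hK hθ hβ hr
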